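/- For any two full-support probability distributions p_1, p_2 on 𝒴, 2·B(p_1, p_2) = min_{q ∈ P(𝒴)} ( D(q‖p_1) + D(q‖p_2) ), where the minimum is over all probability distributions q on 𝒴. Moreover, the minimum is achieved by q⋆(y) = p_1(y)^{1/2} p_2(y)^{1/2} / Σ_{y'∈𝒴} p_1(y')^{1/2} p_2(y')^{1/2}. -/
import Mathlib


open Filter Finset Topology

noncomputable section

/-- `p` is a probability distribution on the finite alphabet. -/
def IsProb {𝓨 : Type} [Fintype 𝓨] (p : 𝓨 → ℝ) : Prop :=
  (∀ y, 0 ≤ p y) ∧ ∑ y, p y = 1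

/-- `p` has full support. -/
def FullSupport {𝓨 : Type} (p : 𝓨 → ℝ) : Prop := ∀ y, 0 < p y

/-- Relative entropy `D(q‖p)` (natural log, convention `0·log 0 = 0`,
which holds since `Real.log 0 = 0` in Mathlib). -/
def KL {𝓨 : Type} [Fintype 𝓨] (q p : 𝓨 → ℝ) : ℝ :=
  ∑ y, q y * Real.log (q y / p y)

/-- Bhattacharyya distance `B(p,q) = -log ∑ √(p y) √(q y)`. -/
def Bhat {𝓨 : Type} [Fintype 𝓨] (p q : 𝓨 → ℝ) : ℝ :=
  - Real.log (∑ y, Real.sqrt (p y) * Real.sqrt (q y))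

/-- Gibbs' inequality. -/
lemma KL_nonneg {𝓨 : Type} [Fintype 𝓨] (q p : 𝓨 → ℝ)
    (hq : IsProb q) (hp : FullSupport p) (hp1 : ∑ y, p y = 1) :
    0 ≤ KL q p := by
  have key : ∀ y : 𝓨, q y - p y ≤ q y * Real.log (q y / p y) := by
    intro y
    rcases eq_or_lt_of_le (hq.1 y) with h0 | hqy
    · simp [← h0]; exact (hp y).le
    · have hx : 0 < p y / q y := div_pos (hp y) hqy
      have := Real.log_le_sub_one_of_pos hx
      rw [Real.log_div (hp y).ne' hqy.ne'] at this
      have h2 : 1 - p y / q y ≤ Real.log (q y / p y) := by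
        rw [Real.log_div hqy.ne' (hp y).ne']; linarith
      have := mul_le_mul_of_nonneg_left h2 hqy.le
      calc q y - p y = q y * (1 - p y / q y) := by field_simp
        _ ≤ q y * Real.log (q y / p y) := this
  calc (0:ℝ) = ∑ y, (q y - p y) := by rw [Finset.sum_sub_distrib, hq.2, hp1]; ring
    _ ≤ KL q p := Finset.sum_le_sum fun y _ => key y

theorem statement1 (𝓨 : Type) [Fintype 𝓨] [Nonempty 𝓨]
    (p₁ p₂ : 𝓨 → ℝ) (h₁ : IsProb p₁) (h₂ : IsProb p₂)
    (hf₁ : FullSupport p₁) (hf₂ : FullSupport p₂) :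
    IsLeast {x : ℝ | ∃ q : 𝓨 → ℝ, IsProb q ∧ x = KL q p₁ + KL q p₂}
      (2 * Bhat p₁ p₂) ∧
    KL (fun y => Real.sqrt (p₁ y) * Real.sqrt (p₂ y) /
          ∑ y', Real.sqrt (p₁ y') * Real.sqrt (p₂ y')) p₁ +
      KL (fun y => Real.sqrt (p₁ y) * Real.sqrt (p₂ y) /
          ∑ y', Real.sqrt (p₁ y') * Real.sqrt (p₂ y')) p₂
      = 2 * Bhat p₁ p₂ := by
  set Z : ℝ := ∑ y, Real.sqrt (p₁ y) * Real.sqrt (p₂ y) with hZdef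
  have hterm : ∀ y : 𝓨, 0 < Real.sqrt (p₁ y) * Real.sqrt (p₂ y) := fun y =>
    mul_pos (Real.sqrt_pos.2 (hf₁ y)) (Real.sqrt_pos.2 (hf₂ y))
  have hZ : 0 < Z :=
    Finset.sum_pos (fun y _ => hterm y) Finset.univ_nonempty
  set qs : 𝓨 → ℝ := fun y => Real.sqrt (p₁ y) * Real.sqrt (p₂ y) / Z with hqs
  have hqspos : FullSupport qs := fun y => div_pos (hterm y) hZ
  have hqsprob : IsProb qs := by
    constructor
    · exact fun y => (hqspos y).le
    · rw [hqs]; simp only []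
      rw [← Finset.sum_div, ← hZdef, div_self hZ.ne']
  have hB : Bhat p₁ p₂ = - Real.log Z := rfl
  -- key identity: for any prob q, KL q p₁ + KL q p₂ = 2 * KL q qs + 2 * Bhat
  have identity : ∀ q : 𝓨 → ℝ, IsProb q →
      KL q p₁ + KL q p₂ = 2 * KL q qs - 2 * Real.log Z := by
    intro q hq
    have termwise : ∀ y : 𝓨,
        q y * Real.log (q y / p₁ y) + q y * Real.log (q y / p₂ y)
        = 2 * (q y * Real.log (q y / qs y)) - 2 * (q y * Real.log Z) := by
      intro y
      rcases eq_or_lt_of_le (hq.1 y) with h0 | hqy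
      · simp [← h0]
      · have hs : qs y = Real.sqrt (p₁ y) * Real.sqrt (p₂ y) / Z := rfl
        have e1 : Real.log (q y / p₁ y) = Real.log (q y) - Real.log (p₁ y) :=
          Real.log_div hqy.ne' (hf₁ y).ne'
        have e2 : Real.log (q y / p₂ y) = Real.log (q y) - Real.log (p₂ y) :=
          Real.log_div hqy.ne' (hf₂ y).ne'
        have e3 : Real.log (q y / qs y) = Real.log (q y) - Real.log (qs y) :=
          Real.log_div hqy.ne' (hqspos y).ne'
        have e4 : Real.log (qs y) =
            (Real.log (p₁ y) + Real.log (p₂ y)) / 2 - Real.log Z := by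
          rw [hs, Real.log_div (hterm y).ne' hZ.ne',
            Real.log_mul (Real.sqrt_pos.2 (hf₁ y)).ne' (Real.sqrt_pos.2 (hf₂ y)).ne',
            Real.log_sqrt (hf₁ y).le, Real.log_sqrt (hf₂ y).le]
          ring
        rw [e1, e2, e3, e4]; ring
    have sumlog : ∑ y, q y * Real.log Z = Real.log Z := by
      rw [← Finset.sum_mul, hq.2, one_mul]
    calc KL q p₁ + KL q p₂
        = ∑ y, (q y * Real.log (q y / p₁ y) + q y * Real.log (q y / p₂ y)) := by
          rw [KL, KL, ← Finset.sum_add_distrib]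
      _ = ∑ y, (2 * (q y * Real.log (q y / qs y)) - 2 * (q y * Real.log Z)) :=
          Finset.sum_congr rfl fun y _ => termwise y
      _ = 2 * KL q qs - 2 * Real.log Z := by
          rw [Finset.sum_sub_distrib, ← Finset.mul_sum, ← Finset.mul_sum, sumlog, KL]
  have hKLqs : KL qs qs = 0 := by
    rw [KL]
    apply Finset.sum_eq_zero
    intro y _
    rw [div_self (hqspos y).ne', Real.log_one, mul_zero]
  have hach : KL qs p₁ + KL qs p₂ = 2 * Bhat p₁ p₂ := by
    rw [identity qs hqsprob, hKLqs, hB]; ring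
  refine ⟨⟨⟨qs, hqsprob, hach.symm⟩, ?_⟩, hach⟩
  rintro x ⟨q, hq, rfl⟩
  rw [identity q hq, hB]
  have := KL_nonneg q qs hq hqspos hqsprob.2
  linarith
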